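/- Let γ=(x,z): (I,t₀) → (ℝ²,(x₀,z₀)) and γ̃=(x̃,z̃): (Ĩ,t̃₀) → (ℝ²,(x̃₀,z̃₀)) be smooth curves with x₀ > 0 and x̃₀ > 0, and let 𝐳(t,θ)=(x(t)cosθ, x(t)sinθ, z(t)) and 𝐳̃ be their surfaces of revolution around the z-axis. Suppose there exist a diffeomorphism germ Φ: (I×[0,2π),(t₀,θ₀)) → (Ĩ×[0,2π),(t̃₀,θ₀)) of the form Φ(t,θ) = (φ(t),θ) and a diffeomorphism germ Ψ = (Ψ₁,Ψ₂,Ψ₃): ((ℝ²∖{0})×ℝ, 𝐳(t₀,θ₀)) → ((ℝ²∖{0})×ℝ, 𝐳̃(t̃₀,θ₀)) such that Ψ∘𝐳 = 𝐳̃∘Φ. Then φ is a diffeomorphism germ and the map ψ = (ψ₁,ψ₂), defined by ψ₁(X,Z) = Ψ₁(Xcosθ₀, Xsinθ₀, Z)cosθ₀ + Ψ₂(Xcosθ₀, Xsinθ₀, Z)sinθ₀ and ψ₂(X,Z) = Ψ₃(Xcosθ₀, Xsinθ₀, Z), is a diffeomorphism germ at (x₀,z₀) with ψ∘γ = γ̃∘φ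 near t₀. -/

import Mathlib

open Real

/-- `f` is a germ of diffeomorphism at `p`, sending `p` to `q`: `f` is smooth near `p`
and has a smooth local inverse near `q`. -/
def DiffeoGermAt {E F : Type*} [NormedAddCommGroup E] [NormedSpace ℝ E]
    [NormedAddCommGroup F] [NormedSpace ℝ F] (f : E → F) (p : E) (q : F) : Prop :=
  f p = q ∧ ∃ (U : Set E) (V : Set F) (g : F → E),
    IsOpen U ∧ p ∈ U ∧ IsOpen V ∧ q ∈ V ∧
    ContDiffOn ℝ (⊤ : ℕ∞) f U ∧ ContDiffOn ℝ (⊤ : ℕ∞) g V ∧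
    Set.MapsTo f U V ∧ Set.MapsTo g V U ∧
    (∀ p' ∈ U, g (f p') = p') ∧ (∀ q' ∈ V, f (g q') = q')

/-- Let `γ = (x, z)` and `γ' = (x', z')` be smooth curves with
`x t₀ > 0`, `x' t₀' > 0`, and `𝐳`, `𝐳'` their surfaces of revolution around the z-axis.
If there are diffeomorphism germs `Φ(t,θ) = (φ t, θ)` and `Ψ = (Ψ₁, Ψ₂, Ψ₃)` with
`Ψ ∘ 𝐳 = 𝐳' ∘ Φ` near `(t₀, θ₀)`, then `φ` is a diffeomorphism germ and
`ψ(X,Z) = (Ψ₁(X cos θ₀, X sin θ₀, Z)cos θ₀ + Ψ₂(X cos θ₀, X sin θ₀, Z)sin θ₀,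
Ψ₃(X cos θ₀, X sin θ₀, Z))` is a diffeomorphism germ with `ψ ∘ γ = γ' ∘ φ` near `t₀`. -/
theorem equivalence_of_surfaces_of_revolution_descends_to_profile_curves
    (x z x' z' : ℝ → ℝ) (t₀ t₀' θ₀ : ℝ)
    (hx : ContDiff ℝ (⊤ : ℕ∞) x) (hz : ContDiff ℝ (⊤ : ℕ∞) z)
    (hx' : ContDiff ℝ (⊤ : ℕ∞) x') (hz' : ContDiff ℝ (⊤ : ℕ∞) z')
    (hx0 : x t₀ > 0) (hx0' : x' t₀' > 0)
    (φ : ℝ → ℝ) (Ψ₁ Ψ₂ Ψ₃ : ℝ × ℝ × ℝ → ℝ)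
    (hΦ : DiffeoGermAt (fun p : ℝ × ℝ => (φ p.1, p.2)) (t₀, θ₀) (t₀', θ₀))
    (hΨ : DiffeoGermAt (fun q : ℝ × ℝ × ℝ => (Ψ₁ q, Ψ₂ q, Ψ₃ q))
      (x t₀ * cos θ₀, x t₀ * sin θ₀, z t₀)
      (x' t₀' * cos θ₀, x' t₀' * sin θ₀, z' t₀'))
    (hcomm : ∀ᶠ p : ℝ × ℝ in nhds (t₀, θ₀),
      (Ψ₁ (x p.1 * cos p.2, x p.1 * sin p.2, z p.1),
       Ψ₂ (x p.1 * cos p.2, x p.1 * sin p.2, z p.1),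
       Ψ₃ (x p.1 * cos p.2, x p.1 * sin p.2, z p.1)) =
        (x' (φ p.1) * cos p.2, x' (φ p.1) * sin p.2, z' (φ p.1)))
    (ψ : ℝ × ℝ → ℝ × ℝ)
    (hψdef : ∀ p : ℝ × ℝ, ψ p =
      (Ψ₁ (p.1 * cos θ₀, p.1 * sin θ₀, p.2) * cos θ₀ +
        Ψ₂ (p.1 * cos θ₀, p.1 * sin θ₀, p.2) * sin θ₀,
       Ψ₃ (p.1 * cos θ₀, p.1 * sin θ₀, p.2))) :
    DiffeoGermAt φ t₀ t₀' ∧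
    DiffeoGermAt ψ (x t₀, z t₀) (x' t₀', z' t₀') ∧
    ∀ᶠ t in nhds t₀, ψ (x t, z t) = (x' (φ t), z' (φ t)) := by
  obtain ⟨hΨ0, U3, V3, G, hU3o, hU3m, hV3o, hV3m, hFs, hGs, hFmap, hGmap, hFli, hFri⟩ := hΨ
  have hφ0 : φ t₀ = t₀' := congrArg Prod.fst hΦ.1
  refine ⟨?_, ?_, ?_⟩
  · -- part 1 : φ is a diffeomorphism germ
    obtain ⟨hΦ0, UΦ, VΦ, GΦ, hUo, hUm, hVo, hVm, hΦs, hGΦs, hΦmap, hGΦmap, hli, hri⟩ := hΦ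
    have hemb : ContDiff ℝ (⊤ : ℕ∞) (fun t : ℝ => (t, θ₀)) := contDiff_id.prodMk contDiff_const
    refine ⟨hφ0, (fun t => (t, θ₀)) ⁻¹' UΦ, (fun t => (t, θ₀)) ⁻¹' VΦ,
      fun u => (GΦ (u, θ₀)).1, hUo.preimage hemb.continuous, hUm,
      hVo.preimage hemb.continuous, hVm, ?_, ?_, ?_, ?_, ?_, ?_⟩
    · exact (contDiff_fst.comp_contDiffOn
        (hΦs.comp hemb.contDiffOn (fun t ht => ht)) : _)
    · exact (contDiff_fst.comp_contDiffOn
        (hGΦs.comp hemb.contDiffOn (fun t ht => ht)) : _)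
    · intro t ht
      exact hΦmap ht
    · intro u hu
      have h2 : (GΦ (u, θ₀)).2 = θ₀ := congrArg Prod.snd (hri (u, θ₀) hu)
      have h3 := hGΦmap hu
      rw [← Prod.mk.eta (p := GΦ (u, θ₀)), h2] at h3
      exact h3
    · intro t ht
      exact congrArg Prod.fst (hli (t, θ₀) ht)
    · intro u hu
      exact congrArg Prod.fst (hri (u, θ₀) hu)
  · -- part 2 : ψ is a diffeomorphism germ
    have hcs : Real.cos θ₀ ^ 2 + Real.sin θ₀ ^ 2 = 1 := by
      rw [add_comm]; exact sin_sq_add_cos_sq θ₀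
    set c := Real.cos θ₀ with hc
    set s := Real.sin θ₀ with hs
    set F : ℝ × ℝ × ℝ → ℝ × ℝ × ℝ := fun q => (Ψ₁ q, Ψ₂ q, Ψ₃ q) with hFdef
    set a : ℝ × ℝ := (x t₀, z t₀) with ha
    set P₀ : ℝ × ℝ × ℝ := (x t₀ * c, x t₀ * s, z t₀) with hP₀
    set Q₀ : ℝ × ℝ × ℝ := (x' t₀' * c, x' t₀' * s, z' t₀') with hQ₀
    have htop : (1 : WithTop ℕ∞) ≤ ((⊤ : ℕ∞) : WithTop ℕ∞) := by
      exact_mod_cast (le_top : (1 : ℕ∞) ≤ ⊤)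
    -- linear maps
    let B : (ℝ × ℝ) →L[ℝ] ℝ × ℝ × ℝ :=
      (c • ContinuousLinearMap.fst ℝ ℝ ℝ).prod
        ((s • ContinuousLinearMap.fst ℝ ℝ ℝ).prod (ContinuousLinearMap.snd ℝ ℝ ℝ))
    let A : (ℝ × ℝ × ℝ) →L[ℝ] ℝ × ℝ :=
      (c • ContinuousLinearMap.fst ℝ ℝ (ℝ × ℝ) +
        s • (ContinuousLinearMap.fst ℝ ℝ ℝ).comp (ContinuousLinearMap.snd ℝ ℝ (ℝ × ℝ))).prod
        ((ContinuousLinearMap.snd ℝ ℝ ℝ).comp (ContinuousLinearMap.snd ℝ ℝ (ℝ × ℝ)))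
    have hB : ∀ p : ℝ × ℝ, B p = (p.1 * c, p.1 * s, p.2) := by
      intro p; simp [B, mul_comm]
    have hA : ∀ q : ℝ × ℝ × ℝ, A q = (q.1 * c + q.2.1 * s, q.2.2) := by
      intro q; simp [A, mul_comm]
    have hψfun : ψ = fun p => A (F (B p)) := by
      funext p; rw [hψdef, hA, hB]
    have hBa : B a = P₀ := by rw [hB]
    -- smoothness of ψ
    have hUψo : IsOpen (B ⁻¹' U3) := hU3o.preimage B.continuous
    have hUψm : a ∈ B ⁻¹' U3 := by simp only [Set.mem_preimage, hBa]; exact hU3m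
    have hψC : ContDiffOn ℝ (⊤ : ℕ∞) ψ (B ⁻¹' U3) := by
      rw [hψfun]
      exact A.contDiff.comp_contDiffOn
        (hFs.comp (B.contDiff.contDiffOn) (fun p hp => hp))
    -- derivatives of F and G
    have hFat : ContDiffAt ℝ (⊤ : ℕ∞) F P₀ := hFs.contDiffAt (hU3o.mem_nhds hU3m)
    have hFd : DifferentiableAt ℝ F P₀ := hFat.differentiableAt (by simp)
    set L : (ℝ × ℝ × ℝ) →L[ℝ] ℝ × ℝ × ℝ := fderiv ℝ F P₀ with hL
    have hLd : HasFDerivAt F L P₀ := hFd.hasFDerivAt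
    have hFP₀ : F P₀ = Q₀ := hΨ0
    have hGat : ContDiffAt ℝ (⊤ : ℕ∞) G Q₀ := hGs.contDiffAt (hV3o.mem_nhds hV3m)
    have hGd : DifferentiableAt ℝ G Q₀ := hGat.differentiableAt (by simp)
    set M : (ℝ × ℝ × ℝ) →L[ℝ] ℝ × ℝ × ℝ := fderiv ℝ G Q₀ with hM
    have hML : M.comp L = ContinuousLinearMap.id ℝ _ := by
      have hGd' : HasFDerivAt G M (F P₀) := by rw [hFP₀]; exact hGd.hasFDerivAt
      have h1 : HasFDerivAt (G ∘ F) (M.comp L) P₀ := hGd'.comp P₀ hLd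
      have h2 : G ∘ F =ᶠ[nhds P₀] id := by
        filter_upwards [hU3o.mem_nhds hU3m] with p hp
        exact hFli p hp
      exact (h1.congr_of_eventuallyEq h2.symm).unique (hasFDerivAt_id P₀)
    -- the key relation
    have hkey : L (-(x t₀ * s), x t₀ * c, 0) = (-(x' t₀' * s), x' t₀' * c, 0) := by
      have hc1 : HasDerivAt (fun θ : ℝ => (x t₀ * Real.cos θ, x t₀ * Real.sin θ, z t₀))
          (-(x t₀ * s), x t₀ * c, (0 : ℝ)) θ₀ := by
        have h1 : HasDerivAt (fun θ : ℝ => x t₀ * Real.cos θ) (-(x t₀ * s)) θ₀ := by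
          simpa [mul_comm, mul_neg] using (Real.hasDerivAt_cos θ₀).const_mul (x t₀)
        have h2 : HasDerivAt (fun θ : ℝ => x t₀ * Real.sin θ) (x t₀ * c) θ₀ :=
          (Real.hasDerivAt_sin θ₀).const_mul (x t₀)
        exact h1.prodMk (h2.prodMk (hasDerivAt_const θ₀ (z t₀)))
      have hF1 : HasDerivAt (fun θ : ℝ => F (x t₀ * Real.cos θ, x t₀ * Real.sin θ, z t₀))
          (L (-(x t₀ * s), x t₀ * c, 0)) θ₀ := hLd.comp_hasDerivAt θ₀ hc1
      have hev2 : (fun θ : ℝ => F (x t₀ * Real.cos θ, x t₀ * Real.sin θ, z t₀))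
          =ᶠ[nhds θ₀] fun θ : ℝ => (x' t₀' * Real.cos θ, x' t₀' * Real.sin θ, z' t₀') := by
        have ht : Filter.Tendsto (fun θ : ℝ => (t₀, θ)) (nhds θ₀) (nhds (t₀, θ₀)) :=
          (continuous_const.prodMk continuous_id).tendsto θ₀
        filter_upwards [ht.eventually hcomm] with θ hθ
        simpa [F, hφ0] using hθ
      have hc2 : HasDerivAt (fun θ : ℝ => (x' t₀' * Real.cos θ, x' t₀' * Real.sin θ, z' t₀'))
          (-(x' t₀' * s), x' t₀' * c, (0 : ℝ)) θ₀ := by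
        have h1 : HasDerivAt (fun θ : ℝ => x' t₀' * Real.cos θ) (-(x' t₀' * s)) θ₀ := by
          simpa [mul_comm, mul_neg] using (Real.hasDerivAt_cos θ₀).const_mul (x' t₀')
        have h2 : HasDerivAt (fun θ : ℝ => x' t₀' * Real.sin θ) (x' t₀' * c) θ₀ :=
          (Real.hasDerivAt_sin θ₀).const_mul (x' t₀')
        exact h1.prodMk (h2.prodMk (hasDerivAt_const θ₀ (z' t₀')))
      exact (hF1.congr_of_eventuallyEq hev2.symm).unique hc2
    -- injectivity of the derivative of ψ
    have hMLa : ∀ w, M (L w) = w := by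
      intro w
      have := DFunLike.congr_fun hML w
      simpa using this
    have hLinj : Function.Injective L := fun u v huv => by
      rw [← hMLa u, ← hMLa v, huv]
    have hx'ne : x' t₀' ≠ 0 := ne_of_gt hx0'
    set D : (ℝ × ℝ) →L[ℝ] ℝ × ℝ := A.comp (L.comp B) with hD
    have hDinj : Function.Injective D := by
      have h0 : ∀ u : ℝ × ℝ, D u = 0 → u = 0 := by
        intro u hu
        set w := L (B u) with hwdef
        have hw : A w = 0 := by simpa [D] using hu
        rw [hA] at hw
        have hw1 : w.1 * c + w.2.1 * s = 0 := congrArg Prod.fst hw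
        have hw2 : w.2.2 = 0 := congrArg Prod.snd hw
        have hwv : x' t₀' • w = (w.2.1 * c - w.1 * s) • (-(x' t₀' * s), x' t₀' * c, (0 : ℝ)) := by
          refine Prod.ext ?_ (Prod.ext ?_ ?_)
          · show x' t₀' * w.1 = (w.2.1 * c - w.1 * s) * -(x' t₀' * s)
            linear_combination x' t₀' * c * hw1 - x' t₀' * w.1 * hcs
          · show x' t₀' * w.2.1 = (w.2.1 * c - w.1 * s) * (x' t₀' * c)
            linear_combination x' t₀' * s * hw1 - x' t₀' * w.2.1 * hcs
          · show x' t₀' * w.2.2 = (w.2.1 * c - w.1 * s) * 0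
            linear_combination x' t₀' * hw2
        have hBu : x' t₀' • B u = (w.2.1 * c - w.1 * s) • (-(x t₀ * s), x t₀ * c, (0 : ℝ)) := by
          apply hLinj
          rw [map_smul, map_smul, hkey]
          exact hwv
        rw [hB] at hBu
        have e1 : x' t₀' * (u.1 * c) = (w.2.1 * c - w.1 * s) * -(x t₀ * s) :=
          congrArg Prod.fst hBu
        have e2 : x' t₀' * (u.1 * s) = (w.2.1 * c - w.1 * s) * (x t₀ * c) :=
          congrArg (fun p : ℝ × ℝ × ℝ => p.2.1) hBu
        have e3 : x' t₀' * u.2 = (w.2.1 * c - w.1 * s) * 0 :=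
          congrArg (fun p : ℝ × ℝ × ℝ => p.2.2) hBu
        have hu1 : x' t₀' * u.1 = 0 := by
          linear_combination c * e1 + s * e2 - x' t₀' * u.1 * hcs
        have hu1' : u.1 = 0 := by
          rcases mul_eq_zero.mp hu1 with h | h
          · exact absurd h hx'ne
          · exact h
        have hu2' : u.2 = 0 := by
          have : x' t₀' * u.2 = 0 := by linarith [e3]
          rcases mul_eq_zero.mp this with h | h
          · exact absurd h hx'ne
          · exact h
        exact Prod.ext hu1' hu2'
      intro u v huv
      have : u - v = 0 := h0 (u - v) (by rw [map_sub, huv, sub_self])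
      exact sub_eq_zero.mp this
    have hDsurj : Function.Surjective D :=
      (LinearMap.injective_iff_surjective (f := (D : ℝ × ℝ →ₗ[ℝ] ℝ × ℝ))).mp hDinj
    let eD : (ℝ × ℝ) ≃ₗ[ℝ] ℝ × ℝ := LinearEquiv.ofBijective (D : ℝ × ℝ →ₗ[ℝ] ℝ × ℝ) ⟨hDinj, hDsurj⟩
    let eL : (ℝ × ℝ) ≃L[ℝ] ℝ × ℝ := eD.toContinuousLinearEquiv
    have heL : (eL : (ℝ × ℝ) →L[ℝ] ℝ × ℝ) = D := by
      apply ContinuousLinearMap.ext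
      intro u
      rfl
    have hDer : HasFDerivAt ψ D a := by
      rw [hψfun]
      have hLd' : HasFDerivAt F L (B a) := by rw [hBa]; exact hLd
      have hLB : HasFDerivAt (fun p : ℝ × ℝ => F (B p)) (L.comp B) a :=
        hLd'.comp a B.hasFDerivAt
      exact A.hasFDerivAt.comp a hLB
    have hDer' : HasFDerivAt ψ (eL : (ℝ × ℝ) →L[ℝ] ℝ × ℝ) a := by rw [heL]; exact hDer
    have hψCa : ContDiffAt ℝ (⊤ : ℕ∞) ψ a := hψC.contDiffAt (hUψo.mem_nhds hUψm)
    let e := hψCa.toOpenPartialHomeomorph ψ hDer' (by simp)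
    have haso : a ∈ e.source := hψCa.mem_toOpenPartialHomeomorph_source hDer' (by simp)
    have hψa : ψ a = (x' t₀', z' t₀') := by
      rw [hψfun]
      show A (F (B a)) = _
      rw [hBa, hFP₀, hA]
      refine Prod.ext ?_ rfl
      show x' t₀' * c * c + x' t₀' * s * s = x' t₀'
      linear_combination x' t₀' * hcs
    have hqt : (x' t₀', z' t₀') ∈ e.target := by
      have := hψCa.image_mem_toOpenPartialHomeomorph_target hDer' (by simp)
      rwa [hψa] at this
    have hsymmq : e.symm (x' t₀', z' t₀') = a := by
      rw [← hψa]; exact e.left_inv haso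
    have hfc : ContinuousOn (fderiv ℝ ψ) (B ⁻¹' U3) :=
      hψC.continuousOn_fderiv_of_isOpen hUψo htop
    set S : Set (ℝ × ℝ) := B ⁻¹' U3 ∩ fderiv ℝ ψ ⁻¹'
        (Set.range ((↑) : ((ℝ × ℝ) ≃L[ℝ] ℝ × ℝ) → (ℝ × ℝ) →L[ℝ] ℝ × ℝ)) with hSdef
    have hSo : IsOpen S := hfc.isOpen_inter_preimage hUψo ContinuousLinearEquiv.isOpen
    have haS : a ∈ S := ⟨hUψm, ⟨eL, heL.trans hDer.fderiv.symm⟩⟩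
    set V : Set (ℝ × ℝ) := e.target ∩ e.symm ⁻¹' S with hVdef
    have hVo : IsOpen V := e.isOpen_inter_preimage_symm hSo
    have hqV : (x' t₀', z' t₀') ∈ V := ⟨hqt, by rw [Set.mem_preimage, hsymmq]; exact haS⟩
    set U : Set (ℝ × ℝ) := (e.source ∩ e ⁻¹' V) ∩ S with hUdef
    have hUo : IsOpen U := (e.isOpen_inter_preimage hVo).inter hSo
    have haU : a ∈ U := ⟨⟨haso, by rw [Set.mem_preimage]; show ψ a ∈ V; rw [hψa]; exact hqV⟩, haS⟩
    have hsymmC : ContDiffOn ℝ (⊤ : ℕ∞) (⇑e.symm) V := by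
      intro q' hq'
      have hpS : e.symm q' ∈ S := hq'.2
      obtain ⟨eq', heq'⟩ := hpS.2
      have hψCp : ContDiffAt ℝ (⊤ : ℕ∞) ψ (e.symm q') := hψC.contDiffAt (hUψo.mem_nhds hpS.1)
      have hD' : HasFDerivAt ψ (eq' : (ℝ × ℝ) →L[ℝ] ℝ × ℝ) (e.symm q') := by
        rw [heq']
        exact (hψCp.differentiableAt (by simp)).hasFDerivAt
      exact (e.contDiffAt_symm hq'.1 hD' hψCp).contDiffWithinAt
    refine ⟨hψa, U, V, ⇑e.symm, hUo, haU, hVo, hqV, hψC.mono (fun p hp => hp.2.1), hsymmC,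
      ?_, ?_, ?_, ?_⟩
    · intro p hp
      exact hp.1.2
    · intro q' hq'
      exact ⟨⟨e.map_target hq'.1, by rw [Set.mem_preimage, e.right_inv hq'.1]; exact hq'⟩, hq'.2⟩
    · intro p hp
      exact e.left_inv hp.1.1
    · intro q' hq'
      exact e.right_inv hq'.1
  · -- part 3 : the diagram commutes on the profile curves
    have hcs : Real.cos θ₀ ^ 2 + Real.sin θ₀ ^ 2 = 1 := by
      rw [add_comm]; exact sin_sq_add_cos_sq θ₀
    have ht : Filter.Tendsto (fun t : ℝ => (t, θ₀)) (nhds t₀) (nhds (t₀, θ₀)) :=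
      (continuous_id.prodMk continuous_const).tendsto t₀
    filter_upwards [ht.eventually hcomm] with t hteq
    have h1 : Ψ₁ (x t * cos θ₀, x t * sin θ₀, z t) = x' (φ t) * cos θ₀ :=
      congrArg Prod.fst hteq
    have h2 : Ψ₂ (x t * cos θ₀, x t * sin θ₀, z t) = x' (φ t) * sin θ₀ :=
      congrArg (fun p : ℝ × ℝ × ℝ => p.2.1) hteq
    have h3 : Ψ₃ (x t * cos θ₀, x t * sin θ₀, z t) = z' (φ t) :=
      congrArg (fun p : ℝ × ℝ × ℝ => p.2.2) hteq
    rw [hψdef]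
    refine Prod.ext ?_ ?_
    · show Ψ₁ (x t * cos θ₀, x t * sin θ₀, z t) * cos θ₀ +
        Ψ₂ (x t * cos θ₀, x t * sin θ₀, z t) * sin θ₀ = x' (φ t)
      rw [h1, h2]
      linear_combination x' (φ t) * hcs
    · exact h3
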